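/- (Lemma 3.) Let ρ and σ be d×d positive definite complex matrices of trace 1. Let {E_i}_{i∈I} be a finite family of nonzero pairwise-orthogonal Hermitian projections summing to the identity, each commuting with both ρ and σ, and let {F_k} be a finite family of pairwise-orthogonal Hermitian projections summing to the identity that refines {E_i} (each F_k satisfies F_k E_i = F_k for exactly one index i). For each i set a_i := tr(E_i ρ E_i), b_i := tr(E_i σ E_i), ρ_i := (1/a_i)·E_i ρ E_i, and σ_i := (1/b_i)·E_i σ E_i, regarded as positive definite trace-one operators on the range of E_i, and let ε_F(σ_i) denote the pinching of σ_i by the projections F_k contained in E_i. Then Re tr(ρ·(log ε_F(σ) − log σ)) = ∑_i a_i · Re tr(ρ_i·(log ε_F(σ_i) − log σ_i)) ≤ max_i Re tr(ρ_i·(log ε_F(σ_i) − log σ_i)). -/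

import Mathlib

open scoped ComplexOrder

/-- Functional-calculus (spectral) logarithm of a Hermitian matrix:
the eigenvalues are replaced by their (natural) logarithms in a spectral
decomposition; junk value `0` on non-Hermitian input. -/
noncomputable def matLog {m : Type*} [Fintype m] [DecidableEq m]
    (A : Matrix m m ℂ) : Matrix m m ℂ :=
  if hA : A.IsHermitian then
    (hA.eigenvectorUnitary : Matrix m m ℂ) *
      Matrix.diagonal (fun i => (Real.log (hA.eigenvalues i) : ℂ)) *
      star (hA.eigenvectorUnitary : Matrix m m ℂ)
  else 0

open Polynomial Matrix

namespace PinchAux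

variable {n : Type*} [Fintype n] [DecidableEq n]

lemma contOn_finite {f : ℝ → ℝ} {s : Set ℝ} (hs : s.Finite) : ContinuousOn f s := by
  rw [continuousOn_iff_continuous_restrict]
  have := hs.to_subtype
  exact continuous_of_discreteTopology

lemma contOn_spec (f : ℝ → ℝ) (A : Matrix n n ℂ) : ContinuousOn f (spectrum ℝ A) :=
  contOn_finite A.finite_real_spectrum

lemma matLog_eq_cfc {A : Matrix n n ℂ} (hA : A.IsHermitian) :
    matLog A = cfc Real.log A := by
  rw [Matrix.IsHermitian.cfc_eq, matLog, dif_pos hA]; rfl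

lemma exists_interp (s : Set ℝ) (hs : s.Finite) (f : ℝ → ℝ) :
    ∃ q : ℝ[X], ∀ x ∈ s, q.eval x = f x := by
  classical
  refine ⟨Lagrange.interpolate hs.toFinset id f, fun x hx => ?_⟩
  exact Lagrange.eval_interpolate_at_node f (Set.injOn_id _) (hs.mem_toFinset.mpr hx)

lemma pow_orth {ι : Type*} [Fintype ι] (A : ι → Matrix n n ℂ)
    (horth : ∀ i j, i ≠ j → A i * A j = 0) (m : ℕ) :
    (∑ i, A i) ^ (m + 1) = ∑ i, (A i) ^ (m + 1) := by
  induction m with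
  | zero => simp
  | succ m ih =>
    rw [pow_succ, ih, Finset.sum_mul]
    refine Finset.sum_congr rfl fun i _ => ?_
    rw [Finset.mul_sum, Finset.sum_eq_single i]
    · rw [← pow_succ]
    · intro j _ hji
      rw [pow_succ, mul_assoc, horth i j (Ne.symm hji), mul_zero]
    · simp

lemma aeval_orth {ι : Type*} [Fintype ι] (A : ι → Matrix n n ℂ)
    (horth : ∀ i j, i ≠ j → A i * A j = 0) (q : ℝ[X]) (hq : q.coeff 0 = 0) :
    aeval (∑ i, A i) q = ∑ i, aeval (A i) q := by
  classical
  rw [aeval_eq_sum_range]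
  have h1 : ∀ i, aeval (A i) q = ∑ m ∈ Finset.range (q.natDegree + 1), q.coeff m • (A i) ^ m :=
    fun i => aeval_eq_sum_range _
  simp_rw [h1]
  rw [Finset.sum_comm]
  refine Finset.sum_congr rfl fun m _ => ?_
  cases m with
  | zero => simp [hq]
  | succ m => rw [pow_orth A horth m, Finset.smul_sum]

lemma corner_aeval {E A : Matrix n n ℂ} (hE : E * E = E) (hA : A = E * A * E)
    (q : ℝ[X]) (hq : q.coeff 0 = 0) :
    E * aeval A q = aeval A q ∧ aeval A q * E = aeval A q := by
  have hEA : E * A = A := by rw [hA, ← mul_assoc, ← mul_assoc, hE]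
  have hAE : A * E = A := by rw [hA, mul_assoc, mul_assoc, hE, ← mul_assoc]
  have hsplit : aeval A q = A * aeval A q.divX := by
    conv_lhs => rw [← q.X_mul_divX_add, hq, map_zero, add_zero]
    rw [_root_.map_mul, aeval_X]
  have hsplit' : aeval A q = aeval A q.divX * A := by
    conv_lhs => rw [← q.X_mul_divX_add, hq, map_zero, add_zero]
    rw [mul_comm X, _root_.map_mul, aeval_X]
  constructor
  · rw [hsplit, ← mul_assoc, hEA]
  · rw [hsplit', mul_assoc, hAE]

lemma matLog_sum_orth {ι : Type*} [Fintype ι] {A : ι → Matrix n n ℂ}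
    (hherm : ∀ i, (A i).IsHermitian)
    (horth : ∀ i j, i ≠ j → A i * A j = 0) :
    matLog (∑ i, A i) = ∑ i, matLog (A i) := by
  classical
  have hS : (∑ i, A i).IsHermitian := by
    unfold Matrix.IsHermitian
    rw [Matrix.conjTranspose_sum]
    exact Finset.sum_congr rfl fun i _ => hherm i
  set s : Set ℝ := {0} ∪ spectrum ℝ (∑ i, A i) ∪ ⋃ i, spectrum ℝ (A i) with hs
  have hfin : s.Finite := by
    refine ((Set.finite_singleton 0).union Matrix.finite_real_spectrum).union ?_
    exact Set.finite_iUnion fun i => Matrix.finite_real_spectrum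
  obtain ⟨q, hq⟩ := exists_interp s hfin Real.log
  have hq0 : q.coeff 0 = 0 := by
    rw [Polynomial.coeff_zero_eq_eval_zero, hq 0 (by simp [hs]), Real.log_zero]
  have hsa : IsSelfAdjoint (∑ i, A i) := hS
  have h1 : matLog (∑ i, A i) = aeval (∑ i, A i) q := by
    rw [matLog_eq_cfc hS, ← cfc_polynomial q (∑ i, A i) hsa]
    exact cfc_congr fun x hx => (hq x (by simp [hs, hx])).symm
  have h2 : ∀ i, matLog (A i) = aeval (A i) q := by
    intro i
    rw [matLog_eq_cfc (hherm i), ← cfc_polynomial q (A i) (hherm i)]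
    refine cfc_congr fun x hx => (hq x ?_).symm
    exact Or.inr (Set.mem_iUnion.mpr ⟨i, hx⟩)
  rw [h1]
  simp_rw [h2]
  exact aeval_orth A horth q hq0

lemma cfc_corner {E A : Matrix n n ℂ} (hE : E * E = E) (hAh : A.IsHermitian)
    (hA : A = E * A * E) (f : ℝ → ℝ) (hf0 : f 0 = 0) :
    E * cfc f A = cfc f A ∧ cfc f A * E = cfc f A := by
  classical
  obtain ⟨q, hq⟩ := exists_interp ({0} ∪ spectrum ℝ A)
    ((Set.finite_singleton 0).union Matrix.finite_real_spectrum) f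
  have heq : cfc f A = aeval A q := by
    rw [← cfc_polynomial q A hAh]
    exact cfc_congr fun x hx => (hq x (Or.inr hx)).symm
  have hq0 : q.coeff 0 = 0 := by
    rw [Polynomial.coeff_zero_eq_eval_zero, hq 0 (Or.inl rfl), hf0]
  rw [heq]
  exact corner_aeval hE hA q hq0

lemma matLog_corner {E A : Matrix n n ℂ} (hE : E * E = E) (hAh : A.IsHermitian)
    (hA : A = E * A * E) :
    E * matLog A = matLog A ∧ matLog A * E = matLog A := by
  rw [matLog_eq_cfc hAh]
  exact cfc_corner hE hAh hA Real.log Real.log_zero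

lemma cfc_support_eq {E A : Matrix n n ℂ} (hE : E * E = E) (hEh : E.IsHermitian)
    (hAh : A.IsHermitian) (hA : A = E * A * E)
    (hker : ∀ x : n → ℂ, E.mulVec x = x → A.mulVec x = 0 → x = 0) :
    cfc (fun x : ℝ => if x = 0 then (0:ℝ) else 1) A = E := by
  classical
  set χ : ℝ → ℝ := fun x => if x = 0 then (0:ℝ) else 1 with hχ
  set Q := cfc χ A with hQ
  have hQh : IsSelfAdjoint Q := cfc_predicate χ A
  have hQQ : Q * Q = Q := by
    rw [hQ, ← cfc_mul χ χ A (contOn_spec χ A) (contOn_spec χ A)]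
    refine cfc_congr fun x _ => ?_
    by_cases h : x = 0 <;> simp [hχ, h]
  have hQA : Q * A = A := by
    calc Q * A = cfc χ A * cfc (id : ℝ → ℝ) A := by
          rw [hQ]; exact congrArg (cfc χ A * ·) (cfc_id (R := ℝ) (a := A) hAh).symm
      _ = cfc (fun x => χ x * id x) A :=
          (cfc_mul χ id A (contOn_spec χ A) (contOn_spec id A)).symm
      _ = cfc (id : ℝ → ℝ) A := by
          refine cfc_congr fun x _ => ?_
          by_cases h : x = 0 <;> simp [hχ, h]
      _ = A := cfc_id (R := ℝ) (a := A) hAh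
  have hAQ : A * Q = A := by
    have := congrArg star hQA
    rwa [StarMul.star_mul, hQh.star_eq, Matrix.star_eq_conjTranspose, hAh.eq] at this
  obtain ⟨hEQ, hQE⟩ := cfc_corner hE hAh hA χ (by simp [hχ])
  rw [← hQ] at hEQ hQE
  have key : ∀ v : n → ℂ, (E - Q).mulVec v = 0 := by
    intro v
    set y := (E - Q).mulVec v with hy
    have h1 : E.mulVec y = y := by
      rw [hy, Matrix.mulVec_mulVec, mul_sub, hE, hEQ]
    have h2 : A.mulVec y = 0 := by
      have hAE : A * E = A := by rw [hA, mul_assoc, mul_assoc, hE, ← mul_assoc]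
      rw [hy, Matrix.mulVec_mulVec, mul_sub, hAE, hAQ, sub_self, Matrix.zero_mulVec]
    exact hker y h1 h2
  have hEQ0 : E - Q = 0 := by
    ext i j
    have := congrFun (key (Pi.single j 1)) i
    simpa using this
  have := sub_eq_zero.mp hEQ0
  rw [hQ] at this
  exact this.symm

lemma real_smul_matrix (c : ℝ) (A : Matrix n n ℂ) : c • A = (c : ℂ) • A := by
  ext i j
  simp [Complex.real_smul]

lemma matLog_smul_corner {c : ℝ} (hc : 0 < c) {E P : Matrix n n ℂ}
    (hE : E * E = E) (hEh : E.IsHermitian) (hPh : P.IsHermitian) (hP : P = E * P * E)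
    (hker : ∀ x : n → ℂ, E.mulVec x = x → P.mulVec x = 0 → x = 0) :
    matLog (c • P) = (Real.log c : ℂ) • E + matLog P := by
  classical
  have hcP : (c • P).IsHermitian := by
    unfold Matrix.IsHermitian
    rw [Matrix.conjTranspose_smul, star_trivial, hPh.eq]
  set χ : ℝ → ℝ := fun x => if x = 0 then (0:ℝ) else 1 with hχ
  have h1 : matLog (c • P) = cfc (fun x : ℝ => Real.log (c * x)) P := by
    rw [matLog_eq_cfc hcP]
    exact (cfc_comp_const_mul c Real.log P
      (contOn_finite (Matrix.finite_real_spectrum.image _)) hPh).symm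
  have h2 : cfc (fun x : ℝ => Real.log (c * x)) P
      = cfc (fun x : ℝ => Real.log c * χ x + Real.log x) P := by
    refine cfc_congr fun x _ => ?_
    by_cases h : x = 0
    · simp [hχ, h]
    · rw [Real.log_mul hc.ne' h]; simp [hχ, h]
  have h3 : cfc (fun x : ℝ => Real.log c * χ x + Real.log x) P
      = cfc (fun x : ℝ => Real.log c * χ x) P + cfc Real.log P :=
    cfc_add P _ _ (contOn_spec _ P) (contOn_spec _ P)
  have h4 : cfc (fun x : ℝ => Real.log c * χ x) P = Real.log c • cfc χ P :=
    cfc_const_mul (Real.log c) χ P (contOn_spec _ P)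
  rw [h1, h2, h3, h4, cfc_support_eq hE hEh hPh hP hker, matLog_eq_cfc hPh,
    real_smul_matrix]

lemma dot_corner {E T : Matrix n n ℂ} (hEh : E.IsHermitian) (x : n → ℂ) :
    star x ⬝ᵥ (E * T * E).mulVec x
      = star (E.mulVec x) ⬝ᵥ T.mulVec (E.mulVec x) := by
  rw [← Matrix.mulVec_mulVec, ← Matrix.mulVec_mulVec, Matrix.dotProduct_mulVec]
  have h : star x ᵥ* E = star (E *ᵥ x) := by rw [Matrix.star_mulVec, hEh.eq]
  rw [h]

lemma corner_ker {E T : Matrix n n ℂ} (hEh : E.IsHermitian) (hT : T.PosDef) :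
    ∀ x : n → ℂ, E.mulVec x = x → (E * T * E).mulVec x = 0 → x = 0 := by
  intro x hEx hPx
  by_contra hx
  have h1 : (0 : ℂ) < star x ⬝ᵥ T.mulVec x := hT.dotProduct_mulVec_pos hx
  have h2 : star x ⬝ᵥ (E * T * E).mulVec x = 0 := by
    rw [hPx, dotProduct_zero]
  rw [dot_corner hEh, hEx] at h2
  exact h1.ne' h2

lemma diag_corner {E T : Matrix n n ℂ} (hEh : E.IsHermitian) (j : n) :
    (E * T * E) j j = star (E.mulVec (Pi.single j 1)) ⬝ᵥ T.mulVec (E.mulVec (Pi.single j 1)) := by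
  rw [← dot_corner hEh]
  have hstar : star (Pi.single j 1 : n → ℂ) = Pi.single j 1 := by
    funext i
    by_cases h : i = j <;> simp [Pi.single_apply, h]
  rw [hstar]
  simp [Matrix.mulVec_single]

lemma trace_corner_pos {E T : Matrix n n ℂ} (hEh : E.IsHermitian)
    (hEne : E ≠ 0) (hT : T.PosDef) : 0 < ((E * T * E).trace).re := by
  classical
  have hdiag : ∀ j, 0 ≤ ((E * T * E) j j).re := by
    intro j
    rw [diag_corner hEh]
    have := hT.posSemidef.dotProduct_mulVec_nonneg (E.mulVec (Pi.single j 1))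
    rw [Complex.le_def] at this
    simpa using this.1
  obtain ⟨i0, j0, hij⟩ : ∃ i j, E i j ≠ 0 := by
    by_contra h
    push_neg at h
    exact hEne (by ext i j; simpa using h i j)
  have hcol : E.mulVec (Pi.single j0 1) ≠ 0 := by
    intro h
    have := congrFun h i0
    simp [Matrix.mulVec_single] at this
    exact hij this
  have hpos : 0 < ((E * T * E) j0 j0).re := by
    rw [diag_corner hEh]
    have := hT.dotProduct_mulVec_pos hcol
    rw [Complex.lt_def] at this
    simpa using this.1
  rw [Matrix.trace, Complex.re_sum]
  exact Finset.sum_pos' (fun j _ => by simpa [Matrix.diag] using hdiag j)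
    ⟨j0, Finset.mem_univ j0, by simpa [Matrix.diag] using hpos⟩

lemma corner_mul_corner_eq_zero {Ei Ej X Y : Matrix n n ℂ} (h : Ei * Ej = 0) :
    (Ei * X * Ei) * (Ej * Y * Ej) = 0 := by
  have s : ∀ Z, Ei * (Ej * Z) = 0 := fun Z => by rw [← mul_assoc, h, zero_mul]
  calc (Ei * X * Ei) * (Ej * Y * Ej) = Ei * (X * (Ei * (Ej * (Y * Ej)))) := by
        simp only [mul_assoc]
    _ = 0 := by rw [s, mul_zero, mul_zero]

lemma corner_idem {E A : Matrix n n ℂ} (hE : E * E = E) :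
    E * (E * A * E) * E = E * A * E := by
  have s : ∀ Y, E * (E * Y) = E * Y := fun Y => by rw [← mul_assoc, hE]
  calc E * (E * A * E) * E = E * (E * (A * (E * E))) := by simp only [mul_assoc]
    _ = E * (A * (E * E)) := s _
    _ = E * (A * E) := by rw [hE]
    _ = E * A * E := by rw [← mul_assoc]

lemma corner_herm {E A : Matrix n n ℂ} (hEh : E.IsHermitian) (hAh : A.IsHermitian) :
    (E * A * E).IsHermitian := by
  unfold Matrix.IsHermitian
  rw [Matrix.conjTranspose_mul, Matrix.conjTranspose_mul, hEh.eq, hAh.eq, mul_assoc]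

lemma trace_corner_assoc {R E M : Matrix n n ℂ} :
    (R * (E * M * E)).trace = (E * R * E * M).trace := by
  have h1 : R * (E * M * E) = R * (E * M) * E := by simp only [mul_assoc]
  have h2 : E * R * (E * M) = E * R * E * M := by simp only [mul_assoc]
  rw [h1, Matrix.trace_mul_cycle, h2]

lemma sum_mulVec {ι : Type*} [Fintype ι] (A : ι → Matrix n n ℂ) (x : n → ℂ) :
    (∑ i, A i) *ᵥ x = ∑ i, (A i) *ᵥ x :=
  map_sum (AddMonoidHom.mk' (fun M : Matrix n n ℂ => M *ᵥ x)
    (fun M N => Matrix.add_mulVec M N x)) A Finset.univ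

lemma dotProduct_sum {ι : Type*} [Fintype ι] (v : n → ℂ) (w : ι → n → ℂ) :
    v ⬝ᵥ (∑ i, w i) = ∑ i, v ⬝ᵥ w i :=
  map_sum (AddMonoidHom.mk' (fun u : n → ℂ => v ⬝ᵥ u)
    (fun _ _ => dotProduct_add _ _ _)) w Finset.univ

end PinchAux


open PinchAux Matrix in
/-- **Lemma 3 (block decomposition of the pinching correction term).**
If the projections `E i` commute with `ρ` and `σ` and the pinching family
`{F k}` refines `{E i}`, then the correction term
`Re tr(ρ (log ε_F(σ) − log σ))` decomposes as a convex combination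
`∑ i a_i · Re tr(ρ_i (log ε_F(σ_i) − log σ_i))` over the normalized blocks,
and is therefore bounded by the largest block term.
(Here blocks are kept as `d×d` matrices supported on the range of `E i`;
since `Real.log 0 = 0`, `matLog` of a block operator agrees on that range with
the logarithm taken on the range of `E i`, and the pinching of `σ_i` by all of
the `F k` agrees with the pinching by the `F k` contained in `E i`.) -/
theorem pinching_correction_block_decomposition
    {d : ℕ} (ρ σ : Matrix (Fin d) (Fin d) ℂ)
    (hρ : ρ.PosDef) (hσ : σ.PosDef) (hρtr : ρ.trace = 1) (hσtr : σ.trace = 1)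
    {ι κ : Type*} [Fintype ι] [Fintype κ]
    (E : ι → Matrix (Fin d) (Fin d) ℂ)
    (hEne : ∀ i, E i ≠ 0)
    (hEherm : ∀ i, (E i).IsHermitian)
    (hEproj : ∀ i, E i * E i = E i)
    (hEorth : ∀ i j, i ≠ j → E i * E j = 0)
    (hEsum : ∑ i, E i = 1)
    (hEρ : ∀ i, E i * ρ = ρ * E i)
    (hEσ : ∀ i, E i * σ = σ * E i)
    (F : κ → Matrix (Fin d) (Fin d) ℂ)
    (hFherm : ∀ k, (F k).IsHermitian)
    (hFproj : ∀ k, F k * F k = F k)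
    (hForth : ∀ k l, k ≠ l → F k * F l = 0)
    (hFsum : ∑ k, F k = 1)
    (hrefine : ∀ k, ∃! i, F k * E i = F k)
    (a b : ι → ℝ)
    (ha : ∀ i, a i = ((E i * ρ * E i).trace).re)
    (hb : ∀ i, b i = ((E i * σ * E i).trace).re)
    (ρblk σblk : ι → Matrix (Fin d) (Fin d) ℂ)
    (hρblk : ∀ i, ρblk i = (a i)⁻¹ • (E i * ρ * E i))
    (hσblk : ∀ i, σblk i = (b i)⁻¹ • (E i * σ * E i)) :
    ((ρ * (matLog (∑ k, F k * σ * F k) - matLog σ)).trace).re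
        = ∑ i, a i *
            ((ρblk i * (matLog (∑ k, F k * σblk i * F k)
              - matLog (σblk i))).trace).re ∧
    ((ρ * (matLog (∑ k, F k * σ * F k) - matLog σ)).trace).re
        ≤ ⨆ i, ((ρblk i * (matLog (∑ k, F k * σblk i * F k)
              - matLog (σblk i))).trace).re := by
  classical
  set T : Matrix (Fin d) (Fin d) ℂ := ∑ k, F k * σ * F k with hTdef
  -- F-E relations
  have hFE0 : ∀ k i, F k * E i = F k ∨ F k * E i = 0 := by
    intro k i
    obtain ⟨i0, hi0, huniq⟩ := hrefine k
    by_cases h : i = i0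
    · exact Or.inl (h ▸ hi0)
    · right
      have h2 : F k * E i0 * E i = 0 := by
        rw [mul_assoc, hEorth i0 i (fun he => h he.symm), mul_zero]
      rwa [hi0] at h2
  have hFE : ∀ k i, E i * F k = F k * E i := by
    intro k i
    have hconj : E i * F k = (F k * E i)ᴴ := by
      rw [Matrix.conjTranspose_mul, (hEherm i).eq, (hFherm k).eq]
    rcases hFE0 k i with h | h
    · rw [h, hconj, h, (hFherm k).eq]
    · rw [h, hconj, h, Matrix.conjTranspose_zero]
  -- T facts
  have hTh : T.IsHermitian := by
    unfold Matrix.IsHermitian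
    rw [hTdef, Matrix.conjTranspose_sum]
    exact Finset.sum_congr rfl fun k _ => (corner_herm (hFherm k) hσ.1).eq
  have hTpos : T.PosDef := by
    refine Matrix.PosDef.of_dotProduct_mulVec_pos hTh fun x hx => ?_
    have hsum : T.mulVec x = ∑ k, (F k * σ * F k).mulVec x := by
      rw [hTdef, PinchAux.sum_mulVec]
    have hdot : star x ⬝ᵥ T.mulVec x
        = ∑ k, star ((F k).mulVec x) ⬝ᵥ σ.mulVec ((F k).mulVec x) := by
      rw [hsum, PinchAux.dotProduct_sum]
      exact Finset.sum_congr rfl fun k _ => dot_corner (hFherm k) x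
    obtain ⟨k0, hk0⟩ : ∃ k, (F k).mulVec x ≠ 0 := by
      by_contra h
      push_neg at h
      apply hx
      have : (∑ k, F k).mulVec x = x := by rw [hFsum, Matrix.one_mulVec]
      rw [PinchAux.sum_mulVec] at this
      rw [← this]
      exact (Finset.sum_eq_zero fun k _ => h k).symm ▸ rfl
    rw [hdot]
    exact Finset.sum_pos' (fun k _ => hσ.posSemidef.dotProduct_mulVec_nonneg _)
      ⟨k0, Finset.mem_univ k0, hσ.dotProduct_mulVec_pos hk0⟩
  -- E i commutes with T
  have hETcomm : ∀ i, E i * T = T * E i := by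
    intro i
    rw [hTdef, Finset.mul_sum, Finset.sum_mul]
    refine Finset.sum_congr rfl fun k _ => ?_
    have s1 : ∀ Y, E i * (F k * Y) = F k * (E i * Y) := fun Y => by
      rw [← mul_assoc, hFE k i, mul_assoc]
    have s2 : ∀ Y, E i * (σ * Y) = σ * (E i * Y) := fun Y => by
      rw [← mul_assoc, hEσ i, mul_assoc]
    calc E i * (F k * σ * F k) = E i * (F k * (σ * F k)) := by simp only [mul_assoc]
      _ = F k * (σ * (E i * F k)) := by rw [s1, s2]
      _ = F k * (σ * (F k * E i)) := by rw [hFE k i]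
      _ = F k * σ * F k * E i := by simp only [mul_assoc]
  -- corner sums
  have hcornersum : ∀ (X : Matrix (Fin d) (Fin d) ℂ), (∀ i, E i * X = X * E i) →
      ∑ i, E i * X * E i = X := by
    intro X hcomm
    have h : ∀ i, E i * X * E i = X * E i := fun i => by
      rw [hcomm i, mul_assoc, hEproj i]
    simp_rw [h]
    rw [← Finset.mul_sum, hEsum, mul_one]
  have hsumS : ∑ i, E i * σ * E i = σ := hcornersum σ hEσ
  have hsumP : ∑ i, E i * T * E i = T := hcornersum T hETcomm
  have hSherm : ∀ i, (E i * σ * E i).IsHermitian := fun i => corner_herm (hEherm i) hσ.1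
  have hPherm : ∀ i, (E i * T * E i).IsHermitian := fun i => corner_herm (hEherm i) hTh
  have horthS : ∀ i j, i ≠ j → (E i * σ * E i) * (E j * σ * E j) = 0 :=
    fun i j hij => corner_mul_corner_eq_zero (hEorth i j hij)
  have horthP : ∀ i j, i ≠ j → (E i * T * E i) * (E j * T * E j) = 0 :=
    fun i j hij => corner_mul_corner_eq_zero (hEorth i j hij)
  -- log decompositions
  have hlogσd : matLog σ = ∑ i, matLog (E i * σ * E i) := by
    conv_lhs => rw [← hsumS]
    exact matLog_sum_orth hSherm horthS
  have hlogTd : matLog T = ∑ i, matLog (E i * T * E i) := by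
    conv_lhs => rw [← hsumP]
    exact matLog_sum_orth hPherm horthP
  -- positivity of a, b
  have hbpos : ∀ i, 0 < b i := fun i =>
    (hb i) ▸ trace_corner_pos (hEherm i) (hEne i) hσ
  have hapos : ∀ i, 0 < a i := fun i =>
    (ha i) ▸ trace_corner_pos (hEherm i) (hEne i) hρ
  -- block pinch identity
  have hpinch : ∀ i, ∑ k, F k * σblk i * F k = (b i)⁻¹ • (E i * T * E i) := by
    intro i
    have h1 : ∀ k, F k * σblk i * F k = (b i)⁻¹ • (F k * (E i * σ * E i) * F k) := by
      intro k; rw [hσblk i, Matrix.mul_smul, Matrix.smul_mul]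
    simp_rw [h1]
    rw [← Finset.smul_sum]
    congr 1
    rw [hTdef, Finset.mul_sum, Finset.sum_mul]
    refine Finset.sum_congr rfl fun k _ => ?_
    have s1 : ∀ Y, E i * (F k * Y) = F k * (E i * Y) := fun Y => by
      rw [← mul_assoc, hFE k i, mul_assoc]
    have s2 : ∀ Y, E i * (σ * Y) = σ * (E i * Y) := fun Y => by
      rw [← mul_assoc, hEσ i, mul_assoc]
    have s3 : E i * E i = E i := hEproj i
    have hL : F k * (E i * σ * E i) * F k = F k * (σ * (F k * E i)) := by
      calc F k * (E i * σ * E i) * F k = F k * (E i * (σ * (E i * F k))) := by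
            simp only [mul_assoc]
        _ = F k * (σ * (E i * (E i * F k))) := by rw [s2]
        _ = F k * (σ * ((E i * E i) * F k)) := by rw [← mul_assoc (E i) (E i) (F k)]
        _ = F k * (σ * (E i * F k)) := by rw [s3]
        _ = F k * (σ * (F k * E i)) := by rw [hFE k i]
    have hR : E i * (F k * σ * F k) * E i = F k * (σ * (F k * E i)) := by
      calc E i * (F k * σ * F k) * E i = E i * (F k * (σ * (F k * E i))) := by
            simp only [mul_assoc]
        _ = F k * (E i * (σ * (F k * E i))) := by rw [s1]
        _ = F k * (σ * (E i * (F k * E i))) := by rw [s2]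
        _ = F k * (σ * (F k * (E i * E i))) := by rw [s1]
        _ = F k * (σ * (F k * E i)) := by rw [s3]
    rw [hL, hR]
  -- block log identity
  have hblocklog : ∀ i, matLog (∑ k, F k * σblk i * F k) - matLog (σblk i)
      = matLog (E i * T * E i) - matLog (E i * σ * E i) := by
    intro i
    rw [hpinch i, hσblk i,
      matLog_smul_corner (inv_pos.mpr (hbpos i)) (hEproj i) (hEherm i) (hPherm i)
        (corner_idem (hEproj i)).symm (corner_ker (hEherm i) hTpos),
      matLog_smul_corner (inv_pos.mpr (hbpos i)) (hEproj i) (hEherm i) (hSherm i)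
        (corner_idem (hEproj i)).symm (corner_ker (hEherm i) hσ)]
    abel
  -- corner property of the log differences
  have hcornerM : ∀ i,
      E i * (matLog (E i * T * E i) - matLog (E i * σ * E i)) * E i
        = matLog (E i * T * E i) - matLog (E i * σ * E i) := by
    intro i
    obtain ⟨hl1, hr1⟩ := matLog_corner (hEproj i) (hPherm i) (corner_idem (hEproj i)).symm
    obtain ⟨hl2, hr2⟩ := matLog_corner (hEproj i) (hSherm i) (corner_idem (hEproj i)).symm
    rw [Matrix.mul_sub, hl1, hl2, Matrix.sub_mul, hr1, hr2]
  -- per-i trace identity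
  have htrace : ∀ i,
      ((ρ * (matLog (E i * T * E i) - matLog (E i * σ * E i))).trace).re
        = a i * ((ρblk i * (matLog (E i * T * E i) - matLog (E i * σ * E i))).trace).re := by
    intro i
    have h2 : (a i : ℂ) • ρblk i = E i * ρ * E i := by
      rw [hρblk i, real_smul_matrix, smul_smul, Complex.ofReal_inv,
        mul_inv_cancel₀ (Complex.ofReal_ne_zero.mpr (hapos i).ne'), one_smul]
    have h1 : (ρ * (matLog (E i * T * E i) - matLog (E i * σ * E i))).trace
        = (a i : ℂ) * (ρblk i * (matLog (E i * T * E i) - matLog (E i * σ * E i))).trace := by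
      calc (ρ * (matLog (E i * T * E i) - matLog (E i * σ * E i))).trace
          = (ρ * (E i * (matLog (E i * T * E i) - matLog (E i * σ * E i)) * E i)).trace := by
            rw [hcornerM i]
        _ = (E i * ρ * E i * (matLog (E i * T * E i) - matLog (E i * σ * E i))).trace :=
            trace_corner_assoc
        _ = (((a i : ℂ) • ρblk i) * (matLog (E i * T * E i) - matLog (E i * σ * E i))).trace := by
            rw [h2]
        _ = (a i : ℂ) * (ρblk i * (matLog (E i * T * E i) - matLog (E i * σ * E i))).trace := by
            rw [Matrix.smul_mul, Matrix.trace_smul, smul_eq_mul]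
    rw [h1, Complex.re_ofReal_mul]
  -- main equality
  have hEq : ((ρ * (matLog T - matLog σ)).trace).re
      = ∑ i, a i * ((ρblk i * (matLog (∑ k, F k * σblk i * F k)
          - matLog (σblk i))).trace).re := by
    rw [hlogTd, hlogσd, ← Finset.sum_sub_distrib, Finset.mul_sum, Matrix.trace_sum,
      Complex.re_sum]
    refine Finset.sum_congr rfl fun i _ => ?_
    rw [hblocklog i]
    exact htrace i
  refine ⟨hEq, ?_⟩
  rw [hEq]
  -- the inequality
  have hsumρ : ∑ i, E i * ρ * E i = ρ := hcornersum ρ hEρ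
  have hsuma : ∑ i, a i = 1 := by
    calc ∑ i, a i = ∑ i, ((E i * ρ * E i).trace).re :=
          Finset.sum_congr rfl fun i _ => ha i
      _ = ((∑ i, (E i * ρ * E i).trace)).re := by rw [Complex.re_sum]
      _ = ((∑ i, E i * ρ * E i).trace).re := by rw [Matrix.trace_sum]
      _ = 1 := by rw [hsumρ, hρtr, Complex.one_re]
  set t : ι → ℝ := fun i => ((ρblk i * (matLog (∑ k, F k * σblk i * F k)
      - matLog (σblk i))).trace).re with htd
  have hbdd : BddAbove (Set.range t) := (Set.finite_range t).bddAbove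
  calc ∑ i, a i * t i ≤ ∑ i, a i * (⨆ j, t j) :=
        Finset.sum_le_sum fun i _ =>
          mul_le_mul_of_nonneg_left (le_ciSup hbdd i) (hapos i).le
    _ = (⨆ j, t j) := by rw [← Finset.sum_mul, hsuma, one_mul]
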